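/- For a PMB RFS with Poisson intensity ρ, Poisson spatial density p_sp, and Bernoulli components (rℓ, p_spℓ), ℓ=1,…,N, the reduced Palm density at a point x with D_PMB(x) > 0 is a mixture of PMB densities: p_{Θ|x}(O|x) = Σ_{Y⁰ ⊎ Y¹ = O} p_Pois(Y⁰) · ( w⁰ · p_MB(Y¹) + Σ_{ℓ=1}^N wℓ · p_{MB∖ℓ}(Y¹) ), where w⁰ = ρ·p_sp(x)/D_PMB(x), wℓ = rℓ·p_spℓ(x)/D_PMB(x), D_PMB(x) = ρ·p_sp(x) + Σℓ rℓ·p_spℓ(x), and p_{MB∖ℓ} denotes the multi-Bernoulli density omitting component ℓ. In particular the mixture weights w⁰, w¹, …, w^N sum to one. -/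

import Mathlib

open MeasureTheory

/-- Density of the union of an independent Poisson RFS (intensity `ρ`, spatial
density `psp`) and the multi-Bernoulli RFS built from the Bernoulli components
with indices in `L ⊆ {1,…,N}` (parameters `(r ℓ, pb ℓ)`).  For `L = univ` this
is the PMB density `p_PMB`; for `L = univ.erase ℓ` it is `p_Pois ⊗ p_{MB∖ℓ}`,
the PMB density with the `ℓ`-th Bernoulli component omitted. -/
noncomputable def pmbGen {X : Type*} (N : ℕ) (L : Finset (Fin N)) (ρ : ℝ) (psp : X → ℝ)
    (r : Fin N → ℝ) (pb : Fin N → X → ℝ) : (n : ℕ) → (Fin n → X) → ℝ :=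
  fun n x => Real.exp (-ρ) *
    ∑ f ∈ (Finset.univ : Finset (Fin n → Option (Fin N))).filter
        (fun f => (∀ i ℓ, f i = some ℓ → ℓ ∈ L) ∧
          ∀ i j ℓ, f i = some ℓ → f j = some ℓ → i = j),
      (∏ ℓ ∈ L.filter (fun ℓ => ∀ i, f i ≠ some ℓ), (1 - r ℓ)) *
        ∏ i, (f i).elim (ρ * psp (x i)) (fun ℓ => r ℓ * pb ℓ (x i))

lemma cond_none {N n : ℕ} (g : Fin n → Option (Fin N)) :
    (∀ i j ℓ, (Fin.cons none g : Fin (n+1) → Option (Fin N)) i = some ℓ → (Fin.cons none g : Fin (n+1) → Option (Fin N)) j = some ℓ → i = j)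
    ↔ (∀ i j ℓ, g i = some ℓ → g j = some ℓ → i = j) := by
  constructor
  · intro h i j ℓ hi hj
    have := h i.succ j.succ ℓ (by simpa using hi) (by simpa using hj)
    exact Fin.succ_injective _ this
  · intro h i j ℓ hi hj
    induction i using Fin.cases with
    | zero => simp at hi
    | succ i =>
      induction j using Fin.cases with
      | zero => simp at hj
      | succ j =>
        simp only [Fin.cons_succ] at hi hj
        exact congrArg Fin.succ (h i j ℓ hi hj)

lemma cond_some {N n : ℕ} (ℓ₀ : Fin N) (g : Fin n → Option (Fin N)) :
    (∀ i j ℓ, (Fin.cons (some ℓ₀) g : Fin (n+1) → Option (Fin N)) i = some ℓ → (Fin.cons (some ℓ₀) g : Fin (n+1) → Option (Fin N)) j = some ℓ → i = j)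
    ↔ ((∀ i, g i ≠ some ℓ₀) ∧ ∀ i j ℓ, g i = some ℓ → g j = some ℓ → i = j) := by
  constructor
  · intro h
    refine ⟨fun i hi => ?_, fun i j ℓ hi hj => ?_⟩
    · have := h i.succ 0 ℓ₀ (by simpa using hi) (by simp)
      exact Fin.succ_ne_zero i this
    · have := h i.succ j.succ ℓ (by simpa using hi) (by simpa using hj)
      exact Fin.succ_injective _ this
  · rintro ⟨hne, hinj⟩ i j ℓ hi hj
    induction i using Fin.cases with
    | zero =>
      induction j using Fin.cases with
      | zero => rfl
      | succ j =>
        simp only [Fin.cons_zero, Option.some_inj] at hi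
        simp only [Fin.cons_succ] at hj
        exact absurd (hi ▸ hj) (hne j)
    | succ i =>
      induction j using Fin.cases with
      | zero =>
        simp only [Fin.cons_zero, Option.some_inj] at hj
        simp only [Fin.cons_succ] at hi
        exact absurd (hj ▸ hi) (hne i)
      | succ j =>
        simp only [Fin.cons_succ] at hi hj
        exact congrArg Fin.succ (hinj i j ℓ hi hj)

lemma filt_none {N n : ℕ} (g : Fin n → Option (Fin N)) :
    (Finset.univ : Finset (Fin N)).filter (fun ℓ => ∀ i, (Fin.cons none g : Fin (n+1) → Option (Fin N)) i ≠ some ℓ)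
      = Finset.univ.filter (fun ℓ => ∀ i, g i ≠ some ℓ) := by
  ext ℓ; simp [Fin.forall_fin_succ]

lemma filt_some {N n : ℕ} (ℓ₀ : Fin N) (g : Fin n → Option (Fin N)) :
    (Finset.univ : Finset (Fin N)).filter (fun ℓ => ∀ i, (Fin.cons (some ℓ₀) g : Fin (n+1) → Option (Fin N)) i ≠ some ℓ)
      = (Finset.univ.erase ℓ₀).filter (fun ℓ => ∀ i, g i ≠ some ℓ) := by
  ext ℓ
  simp only [Finset.mem_filter, Finset.mem_univ, Finset.mem_erase, true_and,
    Fin.forall_fin_succ, Fin.cons_zero, Fin.cons_succ, ne_eq, Option.some_inj]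
  constructor
  · rintro ⟨h0, h⟩; exact ⟨⟨fun e => h0 e.symm, trivial⟩, h⟩
  · rintro ⟨⟨h0, -⟩, h⟩; exact ⟨fun e => h0 e.symm, h⟩

lemma pmb_cons {X : Type*} (N : ℕ) (ρ : ℝ) (psp : X → ℝ)
    (r : Fin N → ℝ) (pb : Fin N → X → ℝ) (x : X) (n : ℕ) (O : Fin n → X) :
    pmbGen N Finset.univ ρ psp r pb (n + 1) (Fin.cons x O)
      = ρ * psp x * pmbGen N Finset.univ ρ psp r pb n O
        + ∑ ℓ, r ℓ * pb ℓ x * pmbGen N (Finset.univ.erase ℓ) ρ psp r pb n O := by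
  unfold pmbGen
  simp only [Finset.sum_filter]
  rw [← Equiv.sum_comp (Fin.consEquiv (fun _ : Fin (n+1) => Option (Fin N)))]
  rw [Fintype.sum_prod_type, Fintype.sum_option]
  simp only [Fin.consEquiv, Equiv.coe_fn_mk]
  have hnone : ∀ g : Fin n → Option (Fin N),
      (if (∀ (i : Fin (n + 1)) (ℓ : Fin N),
              (Fin.cons none g : Fin (n+1) → Option (Fin N)) i = some ℓ → ℓ ∈ Finset.univ) ∧
            ∀ (i j : Fin (n + 1)) (ℓ : Fin N),
              (Fin.cons none g : Fin (n+1) → Option (Fin N)) i = some ℓ →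
                (Fin.cons none g : Fin (n+1) → Option (Fin N)) j = some ℓ → i = j then
          (∏ ℓ ∈ Finset.filter
              (fun ℓ => ∀ i, (Fin.cons none g : Fin (n+1) → Option (Fin N)) i ≠ some ℓ)
              Finset.univ, (1 - r ℓ)) *
            ∏ i : Fin (n + 1),
              ((Fin.cons none g : Fin (n+1) → Option (Fin N)) i).elim
                (ρ * psp ((Fin.cons x O : Fin (n+1) → X) i)) (fun ℓ => r ℓ * pb ℓ ((Fin.cons x O : Fin (n+1) → X) i))
        else 0)
      = ρ * psp x *
          (if (∀ (i : Fin n) (ℓ : Fin N), g i = some ℓ → ℓ ∈ Finset.univ) ∧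
                ∀ (i j : Fin n) (ℓ : Fin N), g i = some ℓ → g j = some ℓ → i = j then
            (∏ ℓ ∈ Finset.filter (fun ℓ => ∀ i, g i ≠ some ℓ) Finset.univ, (1 - r ℓ)) *
              ∏ i : Fin n, (g i).elim (ρ * psp (O i)) (fun ℓ => r ℓ * pb ℓ (O i))
          else 0) := by
    intro g
    have hC := cond_none g
    rw [filt_none, Fin.prod_univ_succ]
    simp only [Fin.cons_zero, Fin.cons_succ, Option.elim_none, Option.elim_some,
      Finset.mem_univ, implies_true, true_and, hC]
    split_ifs with h
    · ring
    · ring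
  have hsome : ∀ (ℓ₀ : Fin N) (g : Fin n → Option (Fin N)),
      (if (∀ (i : Fin (n + 1)) (ℓ : Fin N),
              (Fin.cons (some ℓ₀) g : Fin (n+1) → Option (Fin N)) i = some ℓ → ℓ ∈ Finset.univ) ∧
            ∀ (i j : Fin (n + 1)) (ℓ : Fin N),
              (Fin.cons (some ℓ₀) g : Fin (n+1) → Option (Fin N)) i = some ℓ →
                (Fin.cons (some ℓ₀) g : Fin (n+1) → Option (Fin N)) j = some ℓ → i = j then
          (∏ ℓ ∈ Finset.filter
              (fun ℓ => ∀ i, (Fin.cons (some ℓ₀) g : Fin (n+1) → Option (Fin N)) i ≠ some ℓ)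
              Finset.univ, (1 - r ℓ)) *
            ∏ i : Fin (n + 1),
              ((Fin.cons (some ℓ₀) g : Fin (n+1) → Option (Fin N)) i).elim
                (ρ * psp ((Fin.cons x O : Fin (n+1) → X) i)) (fun ℓ => r ℓ * pb ℓ ((Fin.cons x O : Fin (n+1) → X) i))
        else 0)
      = r ℓ₀ * pb ℓ₀ x *
          (if (∀ (i : Fin n) (ℓ : Fin N), g i = some ℓ → ℓ ∈ Finset.univ.erase ℓ₀) ∧
                ∀ (i j : Fin n) (ℓ : Fin N), g i = some ℓ → g j = some ℓ → i = j then
            (∏ ℓ ∈ Finset.filter (fun ℓ => ∀ i, g i ≠ some ℓ) (Finset.univ.erase ℓ₀), (1 - r ℓ)) *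
              ∏ i : Fin n, (g i).elim (ρ * psp (O i)) (fun ℓ => r ℓ * pb ℓ (O i))
          else 0) := by
    intro ℓ₀ g
    have hmem : (∀ (i : Fin n) (ℓ : Fin N), g i = some ℓ → ℓ ∈ Finset.univ.erase ℓ₀)
        ↔ (∀ i, g i ≠ some ℓ₀) := by
      constructor
      · intro h i hgi
        exact (Finset.mem_erase.mp (h i ℓ₀ hgi)).1 rfl
      · intro h i ℓ hgi
        exact Finset.mem_erase.mpr ⟨fun e => h i (e ▸ hgi), Finset.mem_univ ℓ⟩
    have hC := cond_some ℓ₀ g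
    rw [filt_some, Fin.prod_univ_succ]
    simp only [Fin.cons_zero, Fin.cons_succ, Option.elim_none, Option.elim_some,
      Finset.mem_univ, implies_true, true_and, hC, hmem]
    split_ifs with h
    · ring
    · ring
  erw [Finset.sum_congr rfl (fun g _ => hnone g),
    Finset.sum_congr rfl (fun ℓ₀ _ => Finset.sum_congr rfl (fun g _ => hsome ℓ₀ g))]
  simp only [← Finset.mul_sum]
  rw [mul_add]
  congr 1
  · ring
  · rw [Finset.mul_sum]
    exact Finset.sum_congr rfl fun ℓ _ => by ring

/-- The reduced Palm density of a PMB RFS at a point `x` with `D_PMB(x) > 0`,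
`p_{Θ|x}(O|x) = p_PMB(O ∪ {x}) / D_PMB(x)`, is the mixture of PMB densities
`w⁰·p_PMB(O) + Σ_ℓ wℓ·(p_Pois ⊗ p_{MB∖ℓ})(O)` with weights
`w⁰ = ρ·psp(x)/D_PMB(x)`, `wℓ = rℓ·pbℓ(x)/D_PMB(x)`, where
`D_PMB(x) = ρ·psp(x) + Σ_ℓ rℓ·pbℓ(x)`; moreover the weights sum to one. -/
theorem pmb_reduced_palm {X : Type*} (N : ℕ) (ρ : ℝ) (hρ : 0 ≤ ρ)
    (psp : X → ℝ) (hpsp_nn : ∀ x, 0 ≤ psp x)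
    (r : Fin N → ℝ) (hr : ∀ ℓ, r ℓ ∈ Set.Icc (0 : ℝ) 1)
    (pb : Fin N → X → ℝ) (hpb_nn : ∀ ℓ x, 0 ≤ pb ℓ x)
    (x : X) (hD : 0 < ρ * psp x + ∑ ℓ, r ℓ * pb ℓ x) :
    (∀ n (O : Fin n → X),
      pmbGen N Finset.univ ρ psp r pb (n + 1) (Fin.cons x O)
          / (ρ * psp x + ∑ ℓ, r ℓ * pb ℓ x)
        = (ρ * psp x / (ρ * psp x + ∑ ℓ, r ℓ * pb ℓ x)) *
            pmbGen N Finset.univ ρ psp r pb n O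
          + ∑ ℓ, (r ℓ * pb ℓ x / (ρ * psp x + ∑ ℓ', r ℓ' * pb ℓ' x)) *
              pmbGen N (Finset.univ.erase ℓ) ρ psp r pb n O) ∧
    ρ * psp x / (ρ * psp x + ∑ ℓ, r ℓ * pb ℓ x)
        + ∑ ℓ, r ℓ * pb ℓ x / (ρ * psp x + ∑ ℓ', r ℓ' * pb ℓ' x) = 1 := by
  refine ⟨fun n O => ?_, ?_⟩
  · rw [pmb_cons, add_div, Finset.sum_div]
    congr 1
    · rw [mul_div_right_comm]
    · exact Finset.sum_congr rfl fun ℓ _ => by rw [mul_div_right_comm]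
  · rw [← Finset.sum_div, ← add_div, div_self hD.ne']
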